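/- Let Q be an NQPR in dimension d ≥ 2, and let N_C(Q) = max_{j,k} (1/2)·[λ_max(Q_j)·(‖Q_k‖₁ − 1) − λ_min(Q_j)·(‖Q_k‖₁ + 1)]. Then N_C(Q) ≥ (d² − 2 − (d−2)√(d+1))/d, and equality holds if and only if there exists a SIC Π_1, …, Π_{d²} such that Q_j = √(d+1)·Π_j + ((1 − √(d+1))/d)·I for every j. -/

import Mathlib

set_option maxHeartbeats 1000000

open Finset Matrix

section Scalar


lemma arith_lb (n M m T s : ℝ) (hn : 2 ≤ n) (hs0 : 0 ≤ s) (hs2 : s^2 = n+1)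
    (h3 : 0 ≤ (M + m) - n - n*(M*m))
    (h4 : n ≤ (1/2) * ((M - m)*T + (M + m)))
    (hCS : (1 - M - m)^2 ≤ (n-2) * (n - M^2 - m^2)) :
    (n^2 - 2 - (n-2)*s)/n ≤ (1/2) * (M*(T-1) - m*(T+1)) := by
  have hnR : 0 < n := by linarith
  have hCS' : 0 ≤ (n-2)*(n - ((M+m)^2 - 2*(M*m))) - (1-(M+m))^2 := by nlinarith [hCS]
  have h6 : (n*(M+m)-2)^2 ≤ (n-2)^2*(n+1) := by
    nlinarith [mul_nonneg (mul_nonneg (by norm_num : (0:ℝ) ≤ 2) (by linarith : (0:ℝ) ≤ n-2)) h3,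
      mul_nonneg (le_of_lt hnR) hCS']
  have h7 : n*(M+m) - 2 ≤ (n-2)*s := by
    have h61 : (n*(M+m)-2)^2 ≤ ((n-2)*s)^2 := by rw [mul_pow, hs2]; exact h6
    have h62 := Real.sqrt_le_sqrt h61
    rw [Real.sqrt_sq_eq_abs, Real.sqrt_sq_eq_abs,
      abs_of_nonneg (mul_nonneg (by linarith) hs0)] at h62
    exact le_trans (le_abs_self _) h62
  rw [div_le_iff₀ hnR]
  have h4' := mul_le_mul_of_nonneg_left h4 hnR.le
  nlinarith [h4', h7]

lemma arith_eq (n M m T s : ℝ) (hn : 3 ≤ n) (hs0 : 0 ≤ s) (hs2 : s^2 = n+1)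
    (h3 : 0 ≤ (M + m) - n - n*(M*m))
    (h4 : n ≤ (1/2) * ((M - m)*T + (M + m)))
    (hCS : (1 - M - m)^2 ≤ (n-2) * (n - M^2 - m^2))
    (heq : (1/2) * (M*(T-1) - m*(T+1)) = (n^2 - 2 - (n-2)*s)/n) :
    n*(M+m) = 2 + (n-2)*s ∧ n*(M*m) = (M+m) - n := by
  have hnR : 0 < n := by linarith
  have hn2 : (2:ℝ) ≤ n := by linarith
  have hCS' : 0 ≤ (n-2)*(n - ((M+m)^2 - 2*(M*m))) - (1-(M+m))^2 := by nlinarith [hCS]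
  have h6 : (n*(M+m)-2)^2 ≤ (n-2)^2*(n+1) := by
    nlinarith [mul_nonneg (mul_nonneg (by norm_num : (0:ℝ) ≤ 2) (by linarith : (0:ℝ) ≤ n-2)) h3,
      mul_nonneg (le_of_lt hnR) hCS']
  have h7 : n*(M+m) - 2 ≤ (n-2)*s := by
    have h61 : (n*(M+m)-2)^2 ≤ ((n-2)*s)^2 := by rw [mul_pow, hs2]; exact h6
    have h62 := Real.sqrt_le_sqrt h61
    rw [Real.sqrt_sq_eq_abs, Real.sqrt_sq_eq_abs,
      abs_of_nonneg (mul_nonneg (by linarith) hs0)] at h62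
    exact le_trans (le_abs_self _) h62
  have heq' : n * ((1/2) * (M*(T-1) - m*(T+1))) = n^2 - 2 - (n-2)*s := by
    rw [heq]; field_simp
  have h4' := mul_le_mul_of_nonneg_left h4 hnR.le
  have h8 : 2 + (n-2)*s ≤ n*(M+m) := by nlinarith [h4', heq']
  have hxeq : n*(M+m) = 2 + (n-2)*s := le_antisymm (by linarith) h8
  refine ⟨hxeq, ?_⟩
  have hq6 : (n*(M+m)-2)^2 = (n-2)^2*(n+1) := by
    rw [hxeq]; linear_combination (n-2)^2 * hs2
  have hkey : (0:ℝ) =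
      n * (2*(n-2)*((M+m) - n - n*(M*m)) +
        n*((n-2)*(n - ((M+m)^2 - 2*(M*m))) - (1-(M+m))^2)) := by
    linear_combination (n-1) * hq6
  have hX : 2*(n-2)*((M+m) - n - n*(M*m)) +
      n*((n-2)*(n - ((M+m)^2 - 2*(M*m))) - (1-(M+m))^2) = 0 :=
    (mul_eq_zero.mp hkey.symm).resolve_left hnR.ne'
  have t2 : 0 ≤ n*((n-2)*(n - ((M+m)^2 - 2*(M*m))) - (1-(M+m))^2) :=
    mul_nonneg (le_of_lt hnR) hCS'
  have t3 : 2*(n-2)*((M+m) - n - n*(M*m)) = 0 := by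
    have t1 : 0 ≤ 2*(n-2)*((M+m) - n - n*(M*m)) := mul_nonneg (by linarith) h3
    linarith
  have t4 : (M+m) - n - n*(M*m) = 0 := by
    rcases mul_eq_zero.mp t3 with h | h
    · exfalso; linarith
    · exact h
  linarith

lemma arith_root (n s lam M m : ℝ) (hnR : 0 < n)
    (hxeq : n*(M+m) = 2 + (n-2)*s) (hpeq : n*(M*m) = (M+m) - n)
    (hs2 : s^2 = n+1)
    (hMm : lam = M ∨ lam = m) :
    lam = (1 + (n-1)*s)/n ∨ lam = (1-s)/n := by
  have hq : lam^2 - (M+m)*lam + M*m = 0 := by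
    rcases hMm with h | h <;> rw [h] <;> ring
  have e1 : (1 + (n-1)*s)/n + (1-s)/n = M + m := by
    field_simp
    first
    | linear_combination hxeq
    | linear_combination -hxeq
  have e2 : ((1 + (n-1)*s)/n) * ((1-s)/n) = M*m := by
    field_simp
    first
    | linear_combination (-1)*hxeq - (n-1)*hs2 - n*hpeq
    | linear_combination hxeq + (n-1)*hs2 + n*hpeq
  have hfin : (lam - (1 + (n-1)*s)/n) * (lam - (1-s)/n) = 0 := by
    calc (lam - (1 + (n-1)*s)/n) * (lam - (1-s)/n)
        = lam^2 - ((1 + (n-1)*s)/n + (1-s)/n)*lam + ((1 + (n-1)*s)/n)*((1-s)/n) := by ring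
      _ = lam^2 - (M+m)*lam + M*m := by rw [e1, e2]
      _ = 0 := hq
  rcases mul_eq_zero.mp hfin with h | h
  · left; linarith [sub_eq_zero.mp h]
  · right; linarith [sub_eq_zero.mp h]

lemma arith_two (s lam0 lam1 : ℝ) (hs2 : s^2 = 3)
    (h1 : lam0 + lam1 = 1) (h2 : lam0^2 + lam1^2 = 2) :
    (lam0 = (1 + (2-1)*s)/2 ∨ lam0 = (1-s)/2) ∧
    (lam1 = (1 + (2-1)*s)/2 ∨ lam1 = (1-s)/2) := by
  have key : ∀ t u : ℝ, t + u = 1 → t^2 + u^2 = 2 →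
      t = (1 + (2-1)*s)/2 ∨ t = (1-s)/2 := by
    intro t u h1 h2
    have hq0 : t^2 - t - 1/2 = 0 := by
      linear_combination h2/2 + (t - u - 1)/2 * h1
    have hfin : (t - (1 + (2-1)*s)/2) * (t - (1-s)/2) = 0 := by
      linear_combination hq0 - hs2/4
    rcases mul_eq_zero.mp hfin with h | h
    · left; linarith [sub_eq_zero.mp h]
    · right; linarith [sub_eq_zero.mp h]
  exact ⟨key lam0 lam1 h1 h2, key lam1 lam0 (by linarith) (by linarith)⟩


lemma exists_eq_csSup {n : ℕ} (hn : 0 < n) (f : Fin n → ℝ) :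
    ∃ i, f i = (⨆ j, f j) ∧ ∀ j, f j ≤ f i := by
  haveI : Nonempty (Fin n) := ⟨⟨0, hn⟩⟩
  obtain ⟨i, hi⟩ := Finite.exists_max f
  exact ⟨i, le_antisymm (le_ciSup (Set.Finite.bddAbove (Set.finite_range f)) i)
    (ciSup_le hi), hi⟩

lemma exists_eq_csInf {n : ℕ} (hn : 0 < n) (f : Fin n → ℝ) :
    ∃ i, f i = (⨅ j, f j) ∧ ∀ j, f i ≤ f j := by
  haveI : Nonempty (Fin n) := ⟨⟨0, hn⟩⟩
  obtain ⟨i, hi⟩ := Finite.exists_min f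
  exact ⟨i, le_antisymm (le_ciInf hi) (ciInf_le (Set.Finite.bddBelow (Set.finite_range f)) i), hi⟩

lemma spec_main {n : ℕ} (hn : 2 ≤ n) (lam : Fin n → ℝ)
    (h1 : ∑ i, lam i = 1) (h2 : ∑ i, (lam i)^2 = (n : ℝ)) :
    (((n:ℝ)^2 - 2 - ((n:ℝ)-2) * Real.sqrt ((n:ℝ)+1)) / n ≤
      (1/2 : ℝ) * ((⨆ i, lam i) * ((∑ i, |lam i|) - 1)
        - (⨅ i, lam i) * ((∑ i, |lam i|) + 1)))
    ∧ ((1/2 : ℝ) * ((⨆ i, lam i) * ((∑ i, |lam i|) - 1)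
        - (⨅ i, lam i) * ((∑ i, |lam i|) + 1)) =
        ((n:ℝ)^2 - 2 - ((n:ℝ)-2) * Real.sqrt ((n:ℝ)+1)) / n →
      ∀ i, lam i = (1 + ((n:ℝ)-1) * Real.sqrt ((n:ℝ)+1)) / n ∨
        lam i = (1 - Real.sqrt ((n:ℝ)+1)) / n) := by
  have hnpos : (0:ℕ) < n := by omega
  have hn' : (2:ℝ) ≤ (n:ℝ) := by exact_mod_cast hn
  have hnR : (0:ℝ) < (n:ℝ) := by positivity
  set s : ℝ := Real.sqrt ((n:ℝ)+1) with hs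
  have hs0 : 0 ≤ s := Real.sqrt_nonneg _
  have hs2 : s^2 = (n:ℝ)+1 := Real.sq_sqrt (by positivity)
  obtain ⟨iM, hiM, hMub⟩ := exists_eq_csSup hnpos lam
  obtain ⟨im, him, hmlb⟩ := exists_eq_csInf hnpos lam
  set M : ℝ := ⨆ i, lam i with hMdef
  set m : ℝ := ⨅ i, lam i with hmdef
  set T : ℝ := ∑ i, |lam i| with hTdef
  have hub : ∀ i, lam i ≤ M := fun i => hiM ▸ hMub i
  have hlb : ∀ i, m ≤ lam i := fun i => him ▸ hmlb i
  have hMne : M ≠ m := by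
    intro h
    have hall : ∀ i, lam i = M := fun i => le_antisymm (hub i) (h ▸ hlb i)
    have e1 : (n:ℝ) * M = 1 := by
      rw [← h1, Finset.sum_congr rfl (fun i _ => hall i), Finset.sum_const,
        Finset.card_univ, Fintype.card_fin, nsmul_eq_mul]
    have e2 : (n:ℝ) * M^2 = (n:ℝ) := by
      have hc : ∑ i, (lam i)^2 = ∑ _i : Fin n, M^2 :=
        Finset.sum_congr rfl (fun i _ => by rw [hall i])
      rw [hc, Finset.sum_const, Finset.card_univ, Fintype.card_fin, nsmul_eq_mul] at h2
      linarith
    nlinarith [e1, e2, hn']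
  have hsum3 : ∑ i, (M - lam i) * (lam i - m) = (M + m) - (n:ℝ) - (n:ℝ)*(M*m) := by
    rw [Finset.sum_congr rfl (fun i (_ : i ∈ univ) =>
      (by ring : (M - lam i) * (lam i - m) = (M+m)*lam i - (lam i)^2 - M*m))]
    rw [Finset.sum_sub_distrib, Finset.sum_sub_distrib, ← Finset.mul_sum, h1, h2,
      Finset.sum_const, Finset.card_univ, Fintype.card_fin, nsmul_eq_mul]
    ring
  have h3 : 0 ≤ (M + m) - (n:ℝ) - (n:ℝ)*(M*m) := by
    rw [← hsum3]
    exact Finset.sum_nonneg fun i _ =>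
      mul_nonneg (sub_nonneg.2 (hub i)) (sub_nonneg.2 (hlb i))
  have h4 : (n:ℝ) ≤ (1/2) * ((M - m)*T + (M + m)) := by
    have hpt : ∀ i ∈ univ, (lam i)^2 ≤ (1/2)*((M-m)*|lam i| + (M+m)*(lam i)) := by
      intro i _
      rcases le_or_gt 0 (lam i) with h | h
      · rw [abs_of_nonneg h]; nlinarith [hub i, hlb i]
      · rw [abs_of_neg h]; nlinarith [hub i, hlb i]
    have hle := Finset.sum_le_sum hpt
    rw [h2] at hle
    calc (n:ℝ) ≤ ∑ i, (1/2)*((M-m)*|lam i| + (M+m)*(lam i)) := hle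
      _ = (1/2)*((M-m)*T + (M+m)) := by
          rw [← Finset.mul_sum, Finset.sum_add_distrib, ← Finset.mul_sum, ← Finset.mul_sum,
            h1, ← hTdef, mul_one]
  have hiMim : iM ≠ im := by
    intro h; exact hMne (by rw [← hiM, h, him])
  have hcard2 : ({iM, im} : Finset (Fin n)).card = 2 := Finset.card_pair hiMim
  have hcard : (((({iM, im} : Finset (Fin n))ᶜ).card : ℝ)) = (n:ℝ) - 2 := by
    rw [Finset.card_compl, hcard2, Fintype.card_fin, Nat.cast_sub hn]
    norm_num
  have hrest1 : ∑ i ∈ ({iM, im} : Finset (Fin n))ᶜ, lam i = 1 - M - m := by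
    have hh := Finset.sum_compl_add_sum ({iM, im} : Finset (Fin n)) lam
    rw [Finset.sum_pair hiMim, hiM, him, h1] at hh
    linarith
  have hrest2 : ∑ i ∈ ({iM, im} : Finset (Fin n))ᶜ, (lam i)^2 = (n:ℝ) - M^2 - m^2 := by
    have hh := Finset.sum_compl_add_sum ({iM, im} : Finset (Fin n)) (fun i => (lam i)^2)
    rw [Finset.sum_pair hiMim, hiM, him, h2] at hh
    linarith
  have hCS : (1 - M - m)^2 ≤ ((n:ℝ)-2) * ((n:ℝ) - M^2 - m^2) := by
    have hcs := sq_sum_le_card_mul_sum_sq (s := ({iM, im} : Finset (Fin n))ᶜ) (f := lam)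
    rw [hrest1, hrest2] at hcs
    calc (1 - M - m)^2 ≤ ((((({iM, im} : Finset (Fin n))ᶜ).card : ℝ))) * ((n:ℝ) - M^2 - m^2) := hcs
      _ = ((n:ℝ)-2) * ((n:ℝ) - M^2 - m^2) := by rw [hcard]
  constructor
  · exact arith_lb (n:ℝ) M m T s hn' hs0 hs2 h3 h4 hCS
  · intro heq i
    rcases eq_or_lt_of_le hn with h2n | h3n
    · -- n = 2
      have hn2 : n = 2 := h2n.symm
      subst hn2
      have hs3 : s^2 = 3 := by rw [hs2]; norm_num
      rw [Fin.sum_univ_two] at h1 h2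
      have h2' : lam 0 ^2 + lam 1 ^2 = 2 := by rw [h2]; norm_num
      have hres := arith_two s (lam 0) (lam 1) hs3 h1 h2'
      have hcast : ((2:ℕ):ℝ) = (2:ℝ) := by norm_num
      fin_cases i
      · rcases hres.1 with h | h
        · left; rw [hcast]; first | exact h | (convert h using 2)
        · right; rw [hcast]; exact h
      · rcases hres.2 with h | h
        · left; rw [hcast]; first | exact h | (convert h using 2)
        · right; rw [hcast]; exact h
    · -- n ≥ 3
      have hn3 : (3:ℝ) ≤ (n:ℝ) := by exact_mod_cast h3n
      obtain ⟨hxeq, hpeq⟩ := arith_eq (n:ℝ) M m T s hn3 hs0 hs2 h3 h4 hCS heq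
      have hsum0 : ∑ j, (M - lam j) * (lam j - m) = 0 := by
        rw [hsum3]; linarith
      have hterm : (M - lam i) * (lam i - m) = 0 :=
        (Finset.sum_eq_zero_iff_of_nonneg (fun j _ =>
          mul_nonneg (sub_nonneg.2 (hub j)) (sub_nonneg.2 (hlb j)))).mp hsum0 i (Finset.mem_univ i)
      have hMm' : lam i = M ∨ lam i = m := by
        rcases mul_eq_zero.mp hterm with h | h
        · left; linarith [sub_eq_zero.mp h]
        · right; linarith [sub_eq_zero.mp h]
      exact arith_root (n:ℝ) s (lam i) M m hnR hxeq hpeq hs2 hMm'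


lemma arith_gval (n s : ℝ) (hn : 2 ≤ n) (hs2 : s^2 = n+1) :
    (1/2 : ℝ) * (((1+(n-1)*s)/n) * ((((1+(n-1)*s)/n) - (n-1)*((1-s)/n)) - 1)
      - ((1-s)/n) * ((((1+(n-1)*s)/n) - (n-1)*((1-s)/n)) + 1)) = (n^2-2-(n-2)*s)/n := by
  have hn0 : n ≠ 0 := by linarith
  field_simp
  linear_combination (-2*n + 2*n^2)*hs2

lemma spec_vals {n : ℕ} (hn : 2 ≤ n) (lam : Fin n → ℝ) (h1 : ∑ i, lam i = 1)
    (hab : ∀ i, lam i = (1 + ((n:ℝ)-1) * Real.sqrt ((n:ℝ)+1)) / n ∨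
      lam i = (1 - Real.sqrt ((n:ℝ)+1)) / n) :
    (⨆ i, lam i) = (1 + ((n:ℝ)-1) * Real.sqrt ((n:ℝ)+1)) / n ∧
    (⨅ i, lam i) = (1 - Real.sqrt ((n:ℝ)+1)) / n ∧
    (∑ i, |lam i|) = (1 + ((n:ℝ)-1) * Real.sqrt ((n:ℝ)+1)) / n
      - ((n:ℝ)-1) * ((1 - Real.sqrt ((n:ℝ)+1)) / n) := by
  have hnpos : (0:ℕ) < n := by omega
  haveI : Nonempty (Fin n) := ⟨⟨0, hnpos⟩⟩
  have hn' : (2:ℝ) ≤ (n:ℝ) := by exact_mod_cast hn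
  have hnR : (0:ℝ) < (n:ℝ) := by positivity
  set s : ℝ := Real.sqrt ((n:ℝ)+1) with hs
  have hs0 : 0 ≤ s := Real.sqrt_nonneg _
  have hs1 : 1 < s := by
    rw [hs]
    have := (Real.lt_sqrt (by positivity : (0:ℝ) ≤ 1)).mpr
      (show (1:ℝ)^2 < (n:ℝ)+1 by nlinarith)
    simpa using this
  set a : ℝ := (1 + ((n:ℝ)-1) * s) / n with ha
  set b : ℝ := (1 - s) / n with hb
  have hb0 : b < 0 := div_neg_of_neg_of_pos (by linarith) hnR
  have ha0 : 0 < a := div_pos (by nlinarith) hnR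
  have hba : b < a := by
    rw [ha, hb, div_lt_div_iff₀ hnR hnR]
    have hkey : (1:ℝ)-s < 1+((n:ℝ)-1)*s := by
      have := mul_pos hnR (show (0:ℝ) < s by linarith)
      nlinarith
    exact mul_lt_mul_of_pos_right hkey hnR
  -- counting: exactly one eigenvalue equals a
  set F : Finset (Fin n) := Finset.univ.filter (fun i => lam i = a) with hF
  have hsumF : ∑ i ∈ F, lam i = (F.card : ℝ) * a := by
    rw [Finset.sum_congr rfl (fun i hi => (Finset.mem_filter.mp hi).2),
      Finset.sum_const, nsmul_eq_mul]
  have hsumFc : ∑ i ∈ Finset.univ.filter (fun i => ¬ lam i = a), lam i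
      = ((n - F.card : ℕ) : ℝ) * b := by
    rw [Finset.sum_congr rfl (fun i hi => ((hab i).resolve_left (Finset.mem_filter.mp hi).2)),
      Finset.sum_const, nsmul_eq_mul]
    congr 1
    have heqset : Finset.univ.filter (fun i => ¬ lam i = a) = Finset.univ \ F := by
      rw [hF, Finset.filter_not]
    rw [heqset, Finset.card_sdiff_of_subset (by rw [hF]; exact Finset.filter_subset _ _),
      Finset.card_univ, Fintype.card_fin]
  have hkcard : F.card ≤ n := by
    have := Finset.card_le_card (Finset.filter_subset (fun i => lam i = a)
      (Finset.univ : Finset (Fin n)))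
    simpa using this
  have hsum_split : (F.card : ℝ) * a + ((n - F.card : ℕ) : ℝ) * b = 1 := by
    rw [← hsumF, ← hsumFc, Finset.sum_filter_add_sum_filter_not, h1]
  have habone : a + ((n:ℝ) - 1) * b = 1 := by
    rw [ha, hb]
    field_simp
    ring
  have hkR : (F.card : ℝ) = 1 := by
    have hcast : ((n - F.card : ℕ) : ℝ) = (n:ℝ) - (F.card : ℝ) := by
      rw [Nat.cast_sub hkcard]
    rw [hcast] at hsum_split
    have hfac : ((F.card : ℝ) - 1) * (a - b) = 0 := by
      linear_combination hsum_split - habone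
    rcases mul_eq_zero.mp hfac with h | h
    · linarith
    · exfalso; linarith
  have hk1 : F.card = 1 := by exact_mod_cast hkR
  obtain ⟨i₀, hFi₀⟩ := Finset.card_eq_one.mp hk1
  have hi₀a : lam i₀ = a := by
    have : i₀ ∈ F := by rw [hFi₀]; exact Finset.mem_singleton_self i₀
    exact (Finset.mem_filter.mp this).2
  have hother : ∀ i, i ≠ i₀ → lam i = b := by
    intro i hi
    refine (hab i).resolve_left ?_
    intro hia
    have : i ∈ F := Finset.mem_filter.mpr ⟨Finset.mem_univ i, hia⟩
    rw [hFi₀, Finset.mem_singleton] at this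
    exact hi this
  have hle_a : ∀ i, lam i ≤ a := by
    intro i
    rcases hab i with h | h
    · rw [h]
    · rw [h]; linarith
  have hge_b : ∀ i, b ≤ lam i := by
    intro i
    rcases hab i with h | h
    · rw [h]; linarith
    · rw [h]
  obtain ⟨i₁, hi₁⟩ := Fintype.exists_ne_of_one_lt_card (by rw [Fintype.card_fin]; omega : 1 < Fintype.card (Fin n)) i₀
  have hi₁b : lam i₁ = b := hother i₁ hi₁
  refine ⟨?_, ?_, ?_⟩
  · exact le_antisymm (ciSup_le hle_a)
      (hi₀a ▸ le_ciSup (Set.Finite.bddAbove (Set.finite_range lam)) i₀)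
  · exact le_antisymm
      (hi₁b ▸ ciInf_le (Set.Finite.bddBelow (Set.finite_range lam)) i₁)
      (le_ciInf hge_b)
  · rw [← Finset.add_sum_erase _ _ (Finset.mem_univ i₀), hi₀a, abs_of_nonneg ha0.le]
    have hsum_erase : ∑ i ∈ Finset.univ.erase i₀, |lam i| = ((n:ℝ) - 1) * (-b) := by
      rw [Finset.sum_congr rfl (fun i hi => by
        rw [hother i (Finset.mem_erase.mp hi).1, abs_of_neg hb0]),
        Finset.sum_const, nsmul_eq_mul, Finset.card_erase_of_mem (Finset.mem_univ i₀),
        Finset.card_univ, Fintype.card_fin, Nat.cast_sub (by omega : 1 ≤ n)]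
      norm_num
    rw [hsum_erase]
    ring

end Scalar

section MatrixLemmas

variable {d : ℕ} {A : Matrix (Fin d) (Fin d) ℂ}

theorem mytrace_eq_sum_eig (hA : A.IsHermitian) :
    A.trace = ∑ i, (hA.eigenvalues i : ℂ) := by
  conv_lhs => rw [hA.spectral_theorem, Unitary.conjStarAlgAut_apply]
  rw [Matrix.trace_mul_cycle,
    Matrix.mem_unitaryGroup_iff'.mp (hA.eigenvectorUnitary).2, one_mul,
    Matrix.trace_diagonal]
  rfl

theorem mytrace_sq (hA : A.IsHermitian) :
    (A * A).trace = ∑ i, ((hA.eigenvalues i : ℂ))^2 := by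
  set U := (hA.eigenvectorUnitary : Matrix (Fin d) (Fin d) ℂ) with hUdef
  have hU : star U * U = 1 := Matrix.mem_unitaryGroup_iff'.mp (hA.eigenvectorUnitary).2
  have hU2 : ∀ X : Matrix (Fin d) (Fin d) ℂ, star U * (U * X) = X := fun X => by
    rw [← mul_assoc, hU, one_mul]
  conv_lhs => rw [hA.spectral_theorem, Unitary.conjStarAlgAut_apply]
  rw [← hUdef]
  simp only [mul_assoc, hU2]
  rw [Matrix.trace_mul_comm]
  simp only [mul_assoc, hU, mul_one, Matrix.diagonal_mul_diagonal, Matrix.trace_diagonal]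
  simp [pow_two]

theorem quad_iff (hA : A.IsHermitian) (α β : ℝ) :
    (A - (α : ℂ) • 1) * (A - (β : ℂ) • 1) = 0 ↔
      ∀ i, hA.eigenvalues i = α ∨ hA.eigenvalues i = β := by
  set U := (hA.eigenvectorUnitary : Matrix (Fin d) (Fin d) ℂ) with hUdef
  have hU : star U * U = 1 := Matrix.mem_unitaryGroup_iff'.mp (hA.eigenvectorUnitary).2
  have hU' : U * star U = 1 := Matrix.mem_unitaryGroup_iff.mp (hA.eigenvectorUnitary).2
  have hU2 : ∀ X : Matrix (Fin d) (Fin d) ℂ, star U * (U * X) = X := fun X => by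
    rw [← mul_assoc, hU, one_mul]
  have key : ∀ γ : ℝ, A - (γ : ℂ) • 1 =
      U * diagonal (fun i => (hA.eigenvalues i : ℂ) - γ) * star U := by
    intro γ
    have h1 : ((γ:ℂ) • (1 : Matrix (Fin d) (Fin d) ℂ)) = U * ((γ:ℂ) • 1) * star U := by
      rw [mul_smul_comm, mul_one, smul_mul_assoc, hU']
    conv_lhs => rw [hA.spectral_theorem, Unitary.conjStarAlgAut_apply, h1]
    rw [← sub_mul, ← mul_sub]
    congr 2
    ext i j
    rcases eq_or_ne i j with rfl | hij
    · simp [Matrix.diagonal_apply_eq, Matrix.one_apply_eq]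
    · simp [Matrix.diagonal_apply_ne _ hij, Matrix.one_apply_ne hij]
  rw [key α, key β]
  set Dm := diagonal (fun i => ((hA.eigenvalues i : ℂ) - α) * ((hA.eigenvalues i : ℂ) - β)) with hDm
  have expand : (U * diagonal (fun i => (hA.eigenvalues i : ℂ) - α) * star U) *
      (U * diagonal (fun i => (hA.eigenvalues i : ℂ) - β) * star U) = U * Dm * star U := by
    rw [hDm, ← Matrix.diagonal_mul_diagonal]
    simp only [mul_assoc, hU2]
  rw [expand]
  constructor
  · intro h i
    have h3 : star U * (U * Dm * star U) * U = Dm := by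
      simp only [mul_assoc, hU2, hU, mul_one]
    rw [h, Matrix.mul_zero, Matrix.zero_mul] at h3
    have h4 := congrFun (congrFun h3.symm i) i
    simp only [Matrix.diagonal_apply_eq, Matrix.zero_apply, hDm] at h4
    rcases mul_eq_zero.mp h4 with h5 | h5
    · left
      have : (hA.eigenvalues i : ℂ) = α := by linear_combination h5
      exact_mod_cast this
    · right
      have : (hA.eigenvalues i : ℂ) = β := by linear_combination h5
      exact_mod_cast this
  · intro h
    have : Dm = 0 := by
      rw [hDm]
      have : (fun i => ((hA.eigenvalues i : ℂ) - α) * ((hA.eigenvalues i : ℂ) - β)) = fun _ => 0 := by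
        funext i
        rcases h i with h | h <;> simp [h]
      rw [this, Matrix.diagonal_zero]
    rw [this, Matrix.mul_zero, Matrix.zero_mul]


end MatrixLemmas

/-- For an NQPR `Q` in dimension `d ≥ 2`, the channel negativity
`N_C(Q) = max_{j,k} (1/2)[λ_max(Q j)(‖Q k‖₁ − 1) − λ_min(Q j)(‖Q k‖₁ + 1)]` satisfies
`N_C(Q) ≥ (d² − 2 − (d−2)√(d+1))/d`, with equality iff `Q` arises from a SIC `Π` as
`Q j = √(d+1)·Π j + ((1 − √(d+1))/d)·I`. -/
theorem stmt_11 (d : ℕ) (hd : 2 ≤ d)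
    (Q : Fin (d ^ 2) → Matrix (Fin d) (Fin d) ℂ)
    (hherm : ∀ j, (Q j).IsHermitian)
    (htr : ∀ j, (Q j).trace = 1)
    (hpair : ∀ j k, (Q j * Q k).trace = if j = k then (d : ℂ) else 0)
    (hsum : ∑ j, Q j = (d : ℂ) • (1 : Matrix (Fin d) (Fin d) ℂ)) :
    (((d : ℝ) ^ 2 - 2 - ((d : ℝ) - 2) * Real.sqrt (d + 1)) / d ≤
      ⨆ j, ⨆ k, (1 / 2 : ℝ) *
        ((⨆ i, (hherm j).eigenvalues i) * ((∑ i, |(hherm k).eigenvalues i|) - 1)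
          - (⨅ i, (hherm j).eigenvalues i) * ((∑ i, |(hherm k).eigenvalues i|) + 1))) ∧
    ((⨆ j, ⨆ k, (1 / 2 : ℝ) *
        ((⨆ i, (hherm j).eigenvalues i) * ((∑ i, |(hherm k).eigenvalues i|) - 1)
          - (⨅ i, (hherm j).eigenvalues i) * ((∑ i, |(hherm k).eigenvalues i|) + 1))) =
        ((d : ℝ) ^ 2 - 2 - ((d : ℝ) - 2) * Real.sqrt (d + 1)) / d ↔
      ∃ P : Fin (d ^ 2) → Matrix (Fin d) (Fin d) ℂ,
        (∀ j, (P j).IsHermitian) ∧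
        (∀ j, P j * P j = P j) ∧
        (∀ j, (P j).trace = 1) ∧
        (∀ j k, (P j * P k).trace =
          ((d : ℂ) * (if j = k then 1 else 0) + 1) / ((d : ℂ) + 1)) ∧
        (∀ j, Q j = (Real.sqrt (d + 1) : ℂ) • P j +
          (((1 - Real.sqrt (d + 1)) / d : ℝ) : ℂ) • (1 : Matrix (Fin d) (Fin d) ℂ))) := by
  have hd2pos : 0 < d ^ 2 := by positivity
  haveI : Nonempty (Fin (d ^ 2)) := ⟨⟨0, hd2pos⟩⟩
  haveI : Nonempty (Fin d) := ⟨⟨0, by omega⟩⟩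
  have hdR : (0:ℝ) < (d:ℝ) := by positivity
  have hd' : (2:ℝ) ≤ (d:ℝ) := by exact_mod_cast hd
  set s : ℝ := Real.sqrt ((d:ℝ) + 1) with hsdef
  have hs0 : 0 ≤ s := Real.sqrt_nonneg _
  have hs2 : s ^ 2 = (d:ℝ) + 1 := Real.sq_sqrt (by positivity)
  have hs1 : 1 < s := by
    rw [hsdef]
    have := (Real.lt_sqrt (by positivity : (0:ℝ) ≤ 1)).mpr
      (show (1:ℝ)^2 < (d:ℝ)+1 by nlinarith)
    simpa using this
  set a : ℝ := (1 + ((d:ℝ) - 1) * s) / d with hadef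
  set b : ℝ := (1 - s) / d with hbdef
  have habs : a = b + s := by
    rw [hadef, hbdef]
    field_simp
    ring
  have hsC : ((s:ℂ)) ≠ 0 := by
    exact_mod_cast (by positivity : s ≠ 0)
  have habsC : ((a:ℝ):ℂ) = ((b:ℝ):ℂ) + ((s:ℝ):ℂ) := by exact_mod_cast habs
  have hbdC : ((b:ℝ):ℂ) * (d:ℂ) = 1 - ((s:ℝ):ℂ) := by
    have : b * (d:ℝ) = 1 - s := by rw [hbdef]; field_simp
    exact_mod_cast this
  have hsC2 : ((s:ℝ):ℂ)^2 = (d:ℂ) + 1 := by exact_mod_cast hs2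
  set c : ℝ := ((d : ℝ) ^ 2 - 2 - ((d : ℝ) - 2) * s) / d with hcdef
  -- eigenvalue sum facts
  have hev1 : ∀ j, ∑ i, (hherm j).eigenvalues i = 1 := by
    intro j
    have h := (mytrace_eq_sum_eig (hherm j)).symm.trans (htr j)
    have h2 : ((∑ i, (hherm j).eigenvalues i : ℝ) : ℂ) = ((1:ℝ) : ℂ) := by
      push_cast
      simpa using h
    exact_mod_cast h2
  have hev2 : ∀ j, ∑ i, ((hherm j).eigenvalues i) ^ 2 = (d:ℝ) := by
    intro j
    have hq := hpair j j
    rw [if_pos rfl] at hq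
    have h := (mytrace_sq (hherm j)).symm.trans hq
    have h2 : ((∑ i, ((hherm j).eigenvalues i)^2 : ℝ) : ℂ) = ((d:ℝ) : ℂ) := by
      push_cast
      simpa using h
    exact_mod_cast h2
  -- notation for the inner expression
  set f : Fin (d^2) → Fin (d^2) → ℝ := fun j k => (1 / 2 : ℝ) *
        ((⨆ i, (hherm j).eigenvalues i) * ((∑ i, |(hherm k).eigenvalues i|) - 1)
          - (⨅ i, (hherm j).eigenvalues i) * ((∑ i, |(hherm k).eigenvalues i|) + 1)) with hfdef
  have hflb : ∀ j, c ≤ f j j := by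
    intro j
    exact (spec_main hd ((hherm j).eigenvalues) (hev1 j) (hev2 j)).1
  have hbdd1 : ∀ j, BddAbove (Set.range (fun k => f j k)) := fun j =>
    Set.Finite.bddAbove (Set.finite_range _)
  have hbdd2 : BddAbove (Set.range (fun j => ⨆ k, f j k)) :=
    Set.Finite.bddAbove (Set.finite_range _)
  have hle_sup : ∀ j k, f j k ≤ ⨆ j', ⨆ k', f j' k' := by
    intro j k
    exact le_trans (le_ciSup (hbdd1 j) k) (le_ciSup hbdd2 j)
  constructor
  · exact le_trans (hflb (Classical.arbitrary _))
      (hle_sup (Classical.arbitrary _) (Classical.arbitrary _))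
  · constructor
    · -- equality → SIC
      intro hsup
      have hfjj : ∀ j, f j j = c := fun j =>
        le_antisymm (hsup ▸ hle_sup j j) (hflb j)
      have hab : ∀ j i, (hherm j).eigenvalues i = a ∨ (hherm j).eigenvalues i = b := by
        intro j
        exact (spec_main hd ((hherm j).eigenvalues) (hev1 j) (hev2 j)).2 (hfjj j)
      have hquad : ∀ j, (Q j - (a:ℂ) • 1) * (Q j - (b:ℂ) • 1) = 0 := fun j =>
        (quad_iff (hherm j) a b).mpr (hab j)
      -- construct the SIC
      refine ⟨fun j => ((s:ℂ))⁻¹ • (Q j - (b:ℂ) • 1), ?_, ?_, ?_, ?_, ?_⟩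
      · -- hermitian
        intro j
        have hb : (((b:ℝ):ℂ) • (1 : Matrix (Fin d) (Fin d) ℂ)).IsHermitian := by
          show _ = _
          rw [Matrix.conjTranspose_smul, Matrix.conjTranspose_one]
          congr 1
          simp [Complex.star_def, Complex.conj_ofReal]
        have h1 : (Q j - ((b:ℝ):ℂ) • 1).IsHermitian := (hherm j).sub hb
        show _ = _
        rw [Matrix.conjTranspose_smul, h1.eq]
        congr 1
        rw [star_inv₀]
        simp [Complex.star_def, Complex.conj_ofReal]
      · -- projector
        intro j
        have e : Q j - ((a:ℝ):ℂ) • 1 = (Q j - ((b:ℝ):ℂ) • 1) - ((s:ℝ):ℂ) • 1 := by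
          rw [habsC, add_smul, ← sub_sub]
        have h0 := hquad j
        rw [e, sub_mul, smul_mul_assoc, one_mul, sub_eq_zero] at h0
        rw [smul_mul_assoc, mul_smul_comm, h0, smul_smul, smul_smul,
          mul_assoc, inv_mul_cancel₀ hsC, mul_one]
      · -- trace one
        intro j
        rw [Matrix.trace_smul, Matrix.trace_sub, Matrix.trace_smul, Matrix.trace_one, htr j]
        simp only [smul_eq_mul, Fintype.card_fin]
        field_simp
        first
        | linear_combination hbdC
        | linear_combination -hbdC
      · -- pair traces
        intro j k
        have hd1C : (d:ℂ) + 1 ≠ 0 := by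
          have : ((d:ℕ) + 1 : ℂ) ≠ 0 := Nat.cast_add_one_ne_zero d
          simpa using this
        have expand : (Q j - ((b:ℝ):ℂ) • 1) * (Q k - ((b:ℝ):ℂ) • 1)
            = Q j * Q k - ((b:ℝ):ℂ) • Q j - ((b:ℝ):ℂ) • Q k + (((b:ℝ):ℂ) * ((b:ℝ):ℂ)) • 1 := by
          rw [sub_mul, mul_sub, mul_sub, smul_mul_assoc, one_mul, mul_smul_comm,
            mul_smul_comm]
          simp only [mul_one, smul_smul]
          abel
        rw [smul_mul_assoc, mul_smul_comm, smul_smul, expand]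
        rw [Matrix.trace_smul, Matrix.trace_add, Matrix.trace_sub, Matrix.trace_sub,
          Matrix.trace_smul, Matrix.trace_smul, Matrix.trace_smul, Matrix.trace_one,
          htr j, htr k, hpair j k]
        simp only [smul_eq_mul, Fintype.card_fin]
        have hdC0 : (d:ℂ) ≠ 0 := Nat.cast_ne_zero.mpr (by omega)
        have hbC : ((b:ℝ):ℂ) = (1 - ((s:ℝ):ℂ))/(d:ℂ) := by
          rw [eq_div_iff hdC0]
          linear_combination hbdC
        rw [hbC]
        rcases eq_or_ne j k with rfl | hne
        · simp only [if_pos rfl]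
          field_simp
          simp only [↓reduceIte]
          linear_combination (1-(d:ℂ)^2)*hsC2
        · simp only [if_neg hne]
          field_simp
          linear_combination hsC2
      · -- reconstruction
        intro j
        rw [smul_smul, mul_inv_cancel₀ hsC, one_smul]
        rw [sub_add_cancel]
    · -- SIC → equality
      rintro ⟨P, hPh, hPP, hPtr, hPpair, hQP⟩
      have hquad : ∀ j, (Q j - (a:ℂ) • 1) * (Q j - (b:ℂ) • 1) = 0 := by
        intro j
        rw [hQP j]
        have e2 : ((s:ℝ):ℂ) • P j + ((b:ℝ):ℂ) • 1 - ((a:ℝ):ℂ) • 1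
            = ((s:ℝ):ℂ) • (P j - 1) := by
          rw [habsC, add_smul, smul_sub]
          abel
        have e3 : ((s:ℝ):ℂ) • P j + ((b:ℝ):ℂ) • 1 - ((b:ℝ):ℂ) • 1 = ((s:ℝ):ℂ) • P j := by
          abel
        rw [e2, e3, smul_mul_assoc, mul_smul_comm, sub_mul, one_mul, hPP j, sub_self,
          smul_zero, smul_zero]
      have hab : ∀ j i, (hherm j).eigenvalues i = a ∨ (hherm j).eigenvalues i = b := fun j =>
        (quad_iff (hherm j) a b).mp (hquad j)
      have hvals := fun j => spec_vals hd ((hherm j).eigenvalues) (hev1 j) (hab j)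
      have hfjk : ∀ j k, f j k = c := by
        intro j k
        rw [hfdef]
        simp only
        rw [(hvals j).1, (hvals j).2.1, (hvals k).2.2]
        rw [hcdef]
        exact arith_gval (d:ℝ) s hd' hs2
      have h1 : ∀ j, (⨆ k, f j k) = c := by
        intro j
        rw [show (fun k => f j k) = fun _ => c from funext (hfjk j)]
        exact ciSup_const
      rw [show (fun j => ⨆ k, f j k) = fun _ => c from funext h1]
      exact ciSup_const
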